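/- With notation as above (B = R⁻¹ - R⁻¹t₂t₂ᴴR⁻¹/(t₂ᴴR⁻¹t₂), R = σ²ξ(I + aP_T), P_T the projection onto span{t₁,t₂}), for any z ∈ ℂᴸ: zᴴBt₁ = (1/(σ²ξ(1+a)))·(zᴴt₁ - ρ*√(Q₁/Q₂)·zᴴt₂). -/

import Mathlib

open Matrix

private lemma vecMulVec_mulVec' {L : ℕ} (u v w : Fin L → ℂ) :
    Matrix.vecMulVec u v *ᵥ w = (v ⬝ᵥ w) • u := by
  funext i
  simp [Matrix.mulVec, Matrix.vecMulVec_apply, dotProduct, Finset.mul_sum, mul_comm,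
    mul_left_comm]

private lemma dot_self_pos {L : ℕ} (t : Fin L → ℂ) (ht : t ≠ 0) (Q : ℝ)
    (hQ : (Q : ℂ) = star t ⬝ᵥ t) : 0 < Q := by
  have hQ' : Q = ∑ i, Complex.normSq (t i) := by
    apply Complex.ofReal_injective
    rw [hQ]
    push_cast
    simp [dotProduct, Complex.normSq_eq_conj_mul_self]
  rw [hQ']
  have : ∃ i, t i ≠ 0 := by
    by_contra hc; push_neg at hc; exact ht (funext hc)
  obtain ⟨i, hi⟩ := this
  exact Finset.sum_pos' (fun j _ => Complex.normSq_nonneg _)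
    ⟨i, Finset.mem_univ i, by simpa [Complex.normSq_pos] using hi⟩

theorem stmt_16 {L : ℕ}
    (t₁ t₂ : Fin L → ℂ) (hli : LinearIndependent ℂ ![t₁, t₂])
    (Q₁ Q₂ : ℝ) (hQ₁ : (Q₁ : ℂ) = star t₁ ⬝ᵥ t₁) (hQ₂ : (Q₂ : ℂ) = star t₂ ⬝ᵥ t₂)
    (ρ : ℂ) (hρ : ρ = (star t₁ ⬝ᵥ t₂) / (Real.sqrt (Q₁ * Q₂) : ℂ))
    (P : Matrix (Fin L) (Fin L) ℂ)
    (hPh : P.conjTranspose = P) (hPi : P * P = P)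
    (hPt₁ : P *ᵥ t₁ = t₁) (hPt₂ : P *ᵥ t₂ = t₂)
    (hPrange : ∀ v : Fin L → ℂ, P *ᵥ v ∈ Submodule.span ℂ {t₁, t₂})
    (σ2 ξ a : ℝ) (hσ : 0 < σ2) (hξ : 0 < ξ) (ha : -1 < a)
    (R B : Matrix (Fin L) (Fin L) ℂ)
    (hR : R = ((σ2 * ξ : ℝ) : ℂ) • (1 + (a : ℂ) • P))
    (hB : B = R⁻¹ - (star t₂ ⬝ᵥ (R⁻¹ *ᵥ t₂))⁻¹ • Matrix.vecMulVec (R⁻¹ *ᵥ t₂) (star t₂ ᵥ* R⁻¹)) :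
    ∀ z : Fin L → ℂ,
      star z ⬝ᵥ (B *ᵥ t₁) =
        ((1 / (σ2 * ξ * (1 + a)) : ℝ) : ℂ) *
          (star z ⬝ᵥ t₁ - (starRingEnd ℂ) ρ * ((Real.sqrt (Q₁ / Q₂) : ℝ) : ℂ) * (star z ⬝ᵥ t₂)) := by
  intro z
  have ht₁ : t₁ ≠ 0 := by simpa using hli.ne_zero 0
  have ht₂ : t₂ ≠ 0 := by simpa using hli.ne_zero 1
  have hQ₁pos : 0 < Q₁ := dot_self_pos t₁ ht₁ Q₁ hQ₁
  have hQ₂pos : 0 < Q₂ := dot_self_pos t₂ ht₂ Q₂ hQ₂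
  have hQ₂ne : (Q₂ : ℂ) ≠ 0 := by exact_mod_cast (ne_of_gt hQ₂pos)
  have ha1 : (0:ℝ) < 1 + a := by linarith
  have ha1c : (1:ℂ) + (a:ℂ) ≠ 0 := by
    have : ((1 + a : ℝ) : ℂ) ≠ 0 := by exact_mod_cast (ne_of_gt ha1)
    push_cast at this; exact this
  set u : ℝ := σ2 * ξ * (1 + a) with hu
  have hupos : 0 < u := by positivity
  have hune : (u : ℂ) ≠ 0 := by exact_mod_cast (ne_of_gt hupos)
  set c : ℂ := ((u⁻¹ : ℝ) : ℂ) with hc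
  have hcne : c ≠ 0 := by
    rw [hc]; exact_mod_cast inv_ne_zero (ne_of_gt hupos)
  set M : Matrix (Fin L) (Fin L) ℂ :=
    ((u⁻¹ : ℝ) : ℂ) • (((1:ℂ) + (a:ℂ)) • 1 - (a:ℂ) • P) with hM
  have key : ((1:Matrix (Fin L) (Fin L) ℂ) + (a:ℂ) • P) * (((1:ℂ)+(a:ℂ)) • 1 - (a:ℂ) • P)
      = ((1:ℂ)+(a:ℂ)) • (1:Matrix (Fin L) (Fin L) ℂ) := by
    simp only [mul_sub, add_mul, Matrix.smul_mul, Matrix.mul_smul, Matrix.one_mul,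
      Matrix.mul_one, smul_smul, hPi]
    module
  have hRM : R * M = 1 := by
    rw [hR, hM, Matrix.smul_mul, Matrix.mul_smul, smul_smul, key, smul_smul]
    have hscal : ((σ2 * ξ : ℝ) : ℂ) * ((u⁻¹ : ℝ) : ℂ) * ((1:ℂ)+(a:ℂ)) = 1 := by
      rw [hu]
      have hσ' : (σ2:ℂ) ≠ 0 := by exact_mod_cast (ne_of_gt hσ)
      have hξ' : (ξ:ℂ) ≠ 0 := by exact_mod_cast (ne_of_gt hξ)
      push_cast
      field_simp
    rw [hscal, one_smul]
  have hRinv : R⁻¹ = M := inv_eq_right_inv hRM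
  have hMt : ∀ t : Fin L → ℂ, P *ᵥ t = t → M *ᵥ t = c • t := by
    intro t ht
    rw [hM, Matrix.smul_mulVec, Matrix.sub_mulVec, Matrix.smul_mulVec,
      Matrix.smul_mulVec, Matrix.one_mulVec, ht, ← sub_smul, add_sub_cancel_right,
      one_smul]
  have hRt₁ : R⁻¹ *ᵥ t₁ = c • t₁ := by rw [hRinv]; exact hMt t₁ hPt₁
  have hRt₂ : R⁻¹ *ᵥ t₂ = c • t₂ := by rw [hRinv]; exact hMt t₂ hPt₂
  have hMH : Mᴴ = M := by
    rw [hM]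
    simp [Matrix.conjTranspose_smul, Matrix.conjTranspose_sub, Matrix.conjTranspose_one,
      hPh, Complex.conj_ofReal]
  have hvec : star t₂ ᵥ* R⁻¹ = c • star t₂ := by
    rw [hRinv, ← hMH, ← Matrix.star_mulVec, hMt t₂ hPt₂, star_smul]
    congr 1
    rw [hc, Complex.star_def, Complex.conj_ofReal]
  have hdot : star t₂ ⬝ᵥ (R⁻¹ *ᵥ t₂) = c * (Q₂ : ℂ) := by
    rw [hRt₂, dotProduct_smul, ← hQ₂, smul_eq_mul]
  -- conjugate of ρ
  have hρ' : (starRingEnd ℂ) ρ = (star t₂ ⬝ᵥ t₁) / ((Real.sqrt (Q₁ * Q₂) : ℝ) : ℂ) := by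
    rw [hρ, map_div₀, Complex.conj_ofReal]
    congr 1
    simp [dotProduct, map_sum, mul_comm]
  -- square root identity
  have hsq : Real.sqrt (Q₁ / Q₂) = Real.sqrt (Q₁ * Q₂) / Q₂ := by
    rw [show Q₁ / Q₂ = (Q₁ * Q₂) / Q₂ ^ 2 by field_simp,
      Real.sqrt_div (by positivity), Real.sqrt_sq hQ₂pos.le]
  have hs1 : ((Real.sqrt (Q₁ * Q₂) : ℝ) : ℂ) ≠ 0 := by
    have : (0:ℝ) < Real.sqrt (Q₁ * Q₂) := Real.sqrt_pos.mpr (by positivity)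
    exact_mod_cast (ne_of_gt this)
  -- compute the left-hand side
  rw [hB, Matrix.sub_mulVec, Matrix.smul_mulVec, hdot, hvec, hRt₂,
    vecMulVec_mulVec', dotProduct_sub, dotProduct_smul, hRt₁, dotProduct_smul,
    smul_dotProduct, smul_smul, smul_eq_mul, smul_eq_mul, smul_eq_mul]
  have honediv : ((1 / u : ℝ) : ℂ) = c := by rw [hc]; push_cast; rw [one_div]
  rw [hρ', hsq, hu] at *
  rw [← hu] at *
  rw [honediv]
  have hsQ₁ : ((Real.sqrt Q₁ : ℝ) : ℂ) ≠ 0 := by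
    exact_mod_cast (ne_of_gt (Real.sqrt_pos.mpr hQ₁pos))
  have hsQ₂ : ((Real.sqrt Q₂ : ℝ) : ℂ) ≠ 0 := by
    exact_mod_cast (ne_of_gt (Real.sqrt_pos.mpr hQ₂pos))
  push_cast
  field_simp [hcne, hQ₂ne, hs1, hsQ₁, hsQ₂]
  rw [dotProduct_smul, smul_eq_mul]
  ring
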